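/- Let P : Fin 4 → Fin 4 → Matrix (Fin 2) (Fin 2) ℂ be a family of 2×2 complex matrices P_{μα} (μ, α ∈ {0,1,2,3}). Suppose that for every λ = (λ₁,λ₂,λ₃) ∈ ℝ³ and all μ, ν ∈ {0,1,2,3}, the matrices P_{μ0} + λ₁P_{μ1} + λ₂P_{μ2} + λ₃P_{μ3} and P_{ν0} + λ₁P_{ν1} + λ₂P_{ν2} + λ₃P_{ν3} commute. Then for all μ, ν, α, β ∈ {0,1,2,3} one has [P_{μα}, P_{νβ}] + [P_{μβ}, P_{να}] = 0; in particular, taking α = β, [P_{μα}, P_{να}] = 0. -/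

import Mathlib

set_option maxHeartbeats 1000000 in
/-- Splitting with respect to the separation constants λ of the
commutativity conditions for the coefficient matrices `P μ α` of the reduced
separation equations of the Pauli equation. -/
theorem splitting_of_commutativity
    (P : Fin 4 → Fin 4 → Matrix (Fin 2) (Fin 2) ℂ)
    (h : ∀ (l1 l2 l3 : ℝ) (μ ν : Fin 4),
      Commute
        (P μ 0 + (l1 : ℂ) • P μ 1 + (l2 : ℂ) • P μ 2 + (l3 : ℂ) • P μ 3)
        (P ν 0 + (l1 : ℂ) • P ν 1 + (l2 : ℂ) • P ν 2 + (l3 : ℂ) • P ν 3)) :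
    (∀ μ ν α β : Fin 4,
      (P μ α * P ν β - P ν β * P μ α) + (P μ β * P ν α - P ν α * P μ β) = 0)
    ∧ (∀ μ ν α : Fin 4, P μ α * P ν α - P ν α * P μ α = 0) := by
  have half : ∀ X : Matrix (Fin 2) (Fin 2) ℂ, X + X = 0 → X = 0 := by
    intro X hX
    have h2 : (2:ℂ) • X = 0 := by rw [two_smul]; exact hX
    simpa using h2
  have key : ∀ μ ν α β : Fin 4,
      (P μ α * P ν β - P ν β * P μ α) + (P μ β * P ν α - P ν α * P μ β) = 0 := by
    intro μ ν α β
    have h0 := (h 0 0 0 μ ν).eq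
    have hp1 := (h 1 0 0 μ ν).eq
    have hm1 := (h (-1) 0 0 μ ν).eq
    have hp2 := (h 0 1 0 μ ν).eq
    have hm2 := (h 0 (-1) 0 μ ν).eq
    have hp3 := (h 0 0 1 μ ν).eq
    have hm3 := (h 0 0 (-1) μ ν).eq
    have h12 := (h 1 1 0 μ ν).eq
    have h13 := (h 1 0 1 μ ν).eq
    have h23 := (h 0 1 1 μ ν).eq
    simp only [Complex.ofReal_zero, Complex.ofReal_one, Complex.ofReal_neg,
      zero_smul, one_smul, neg_smul, add_zero, add_mul, mul_add, neg_mul,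
      mul_neg, neg_neg] at h0 hp1 hm1 hp2 hm2 hp3 hm3 h12 h13 h23
    fin_cases α <;> fin_cases β <;> apply half
    · linear_combination (norm := abel!) h0 + h0 + h0 + h0
    · linear_combination (norm := abel!) hp1 - hm1
    · linear_combination (norm := abel!) hp2 - hm2
    · linear_combination (norm := abel!) hp3 - hm3
    · linear_combination (norm := abel!) hp1 - hm1
    · linear_combination (norm := abel!) hp1 + hp1 + hm1 + hm1 - h0 - h0 - h0 - h0
    · linear_combination (norm := abel!) h12 + h12 + h0 + h0 - hp1 - hp1 - hp2 - hp2
    · linear_combination (norm := abel!) h13 + h13 + h0 + h0 - hp1 - hp1 - hp3 - hp3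
    · linear_combination (norm := abel!) hp2 - hm2
    · linear_combination (norm := abel!) h12 + h12 + h0 + h0 - hp1 - hp1 - hp2 - hp2
    · linear_combination (norm := abel!) hp2 + hp2 + hm2 + hm2 - h0 - h0 - h0 - h0
    · linear_combination (norm := abel!) h23 + h23 + h0 + h0 - hp2 - hp2 - hp3 - hp3
    · linear_combination (norm := abel!) hp3 - hm3
    · linear_combination (norm := abel!) h13 + h13 + h0 + h0 - hp1 - hp1 - hp3 - hp3
    · linear_combination (norm := abel!) h23 + h23 + h0 + h0 - hp2 - hp2 - hp3 - hp3
    · linear_combination (norm := abel!) hp3 + hp3 + hm3 + hm3 - h0 - h0 - h0 - h0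
  exact ⟨key, fun μ ν α => half _ (key μ ν α α)⟩
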